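/- arXiv:2512.11702 — 4 statements merged into one kernel-verified Lean document; each statement's English description precedes it below -/
import Mathlib

section
/- Let W be the one-dimensional 𝔽₃-representation of H on which h ∈ H acts by multiplication by χ(h). Then the dual module M* is isomorphic, as a representation of G = SL₂(𝔽₃) over 𝔽₃, to the induced representation Ind_H^G W = 𝔽₃[G] ⊗_{𝔽₃[H]} W. Explicitly, with t = [[1,1],[0,1]] (so that {e, t, t²} is a left transversal of H in G), the 𝔽₃-linear map φ determined by φ(x_s) = t^{s−1} ⊗ w for s = 1,2,3 is a G-equivariant isomorphism from M* to Ind_H^G W. -/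
open Matrix MvPolynomial

set_option synthInstance.maxHeartbeats 1000000
set_option maxHeartbeats 1000000

abbrev F3 : Type := ZMod 3
abbrev G3 : Type := Matrix.SpecialLinearGroup (Fin 2) F3
abbrev S3 : Type := MvPolynomial (Fin 3) F3

/-- The fixed basis `v₁, v₂, v₃` of the traceless `2 × 2` matrices over `𝔽₃`. -/
def V : Fin 3 → Matrix (Fin 2) (Fin 2) F3 :=
  ![!![0, 1; -1, 0], !![-1, -1; -1, 1], !![1, -1; -1, -1]]

/-- Coordinates of a traceless matrix with respect to the basis `v₁, v₂, v₃`. -/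
def coordM : Fin 3 → Matrix (Fin 2) (Fin 2) F3 → F3 :=
  ![fun X => X 1 0 - X 0 1, fun X => X 0 0 - X 0 1 - X 1 0, fun X => -(X 0 0 + X 0 1 + X 1 0)]

/-- Matrix of the (dual) action of `g` on `M*`: `g • x_s = ∑ r, (rep g) s r • x_r`, where
`(rep g) s r = x_s (g⁻¹ • v_r) = coordM s (g⁻¹ vᵣ g)`, coming from `(g • f)(v) = f(g⁻¹ • v)`. -/
def rep (g : G3) : Matrix (Fin 3) (Fin 3) F3 :=
  Matrix.of fun s r => coordM s ((g⁻¹ : G3) * V r * (g : Matrix (Fin 2) (Fin 2) F3))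

/-- The action of `g ∈ SL₂(𝔽₃)` on `S = 𝔽₃[x₁,x₂,x₃]` by algebra automorphisms, given by
substituting `x_s ↦ g • x_s = ∑ r, (rep g) s r • x_r`. -/
noncomputable def actS (g : G3) : S3 →ₐ[F3] S3 :=
  MvPolynomial.aeval fun s => ∑ r : Fin 3, rep g s r • MvPolynomial.X r

noncomputable def a1 : S3 := X 0 ^ 2 + X 1 ^ 2 + X 2 ^ 2
noncomputable def a2 : S3 := X 0 * X 1 * X 2
noncomputable def a3 : S3 := X 0 ^ 4 + X 1 ^ 4 + X 2 ^ 4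
noncomputable def bP : S3 := X 0 ^ 4 * X 1 ^ 2 + X 0 ^ 2 * X 2 ^ 4 + X 1 ^ 4 * X 2 ^ 2
noncomputable def av : Fin 3 → S3 := ![a1, a2, a3]

def tm : G3 := ⟨!![1, 1; 0, 1], by decide⟩
def im : G3 := ⟨!![0, 1; -1, 0], by decide⟩
def jm : G3 := ⟨!![1, -1; -1, -1], by decide⟩

/-- The quaternion subgroup `H = ⟨i, j⟩ ≅ Q₈` of `SL₂(𝔽₃)`. -/
def H3 : Subgroup G3 := Subgroup.closure {im, jm}

/-- The character with `χ(±e) = χ(±i) = 1` and `χ(±j) = χ(±k) = -1` (its values off the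
set `{±e, ±i}` are `-1`; only the restriction to `H` is ever used). -/
def chi (g : G3) : F3 :=
  if (g : Matrix (Fin 2) (Fin 2) F3) = 1 ∨ (g : Matrix (Fin 2) (Fin 2) F3) = -1 ∨
     (g : Matrix (Fin 2) (Fin 2) F3) = (im : Matrix (Fin 2) (Fin 2) F3) ∨
     (g : Matrix (Fin 2) (Fin 2) F3) = -(im : Matrix (Fin 2) (Fin 2) F3) then 1 else -1

/-- The `𝔽₃`-submodule `S^H_χ` of `χ`-relative `H`-invariants in `S`. -/
noncomputable def relInv : Submodule F3 S3 where
  carrier := {f | ∀ h ∈ H3, actS h f = chi h • f}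
  add_mem' := by
    intro f g hf hg h hh
    rw [map_add, hf h hh, hg h hh, smul_add]
  zero_mem' := by
    intro h hh
    rw [map_zero, smul_zero]
  smul_mem' := by
    intro c f hf h hh
    rw [_root_.map_smul, hf h hh, smul_comm]

/-- The group algebra `𝔽₃[G]` as an `𝔽₃`-vector space. -/
abbrev FreeG : Type := G3 →₀ F3

/-- Left multiplication by `g` on `𝔽₃[G]`. -/
noncomputable def lmul (g : G3) : FreeG →ₗ[F3] FreeG :=
  Finsupp.lmapDomain F3 F3 (fun a => g * a)

/-- The submodule of relations defining `𝔽₃[G] ⊗_{𝔽₃[H]} W` for the one-dimensional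
`H`-representation `W` with character `χ`: it is spanned by the elements
`(g·h) ⊗ w - g ⊗ (h·w) = e_{gh} - χ(h)·e_g`. -/
noncomputable def IndRel : Submodule F3 FreeG :=
  Submodule.span F3
    {x : FreeG | ∃ g h : G3, h ∈ H3 ∧
      x = Finsupp.single (g * h) 1 - chi h • Finsupp.single g 1}

/-- The induced representation `Ind_H^G W = 𝔽₃[G] ⊗_{𝔽₃[H]} W` (as a vector space). -/
abbrev IndW : Type := FreeG ⧸ IndRel

/-- The `𝔽₃`-linear map `φ : M* → Ind_H^G W` determined by `φ(x_s) = t^{s-1} ⊗ w`, where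
`M*` is identified with `Fin 3 → 𝔽₃` via the dual basis `x₁, x₂, x₃`, and `t^{s-1} ⊗ w`
is the class of `e_{t^{s-1}}`. -/
noncomputable def phi1 : (Fin 3 → F3) →ₗ[F3] IndW :=
  ∑ i : Fin 3, LinearMap.smulRight (LinearMap.proj i)
    (Submodule.Quotient.mk (Finsupp.single (tm ^ (i : ℕ)) (1 : F3)))

-- auxiliary section, to be inserted before `theorem stmt1`

instance : DecidableEq G3 := fun a b => decidable_of_iff (a.1 = b.1) Subtype.ext_iff.symm

/-- `k = ij`. -/
def km : G3 := im * jm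

/-- Decidable description of the 8-element carrier of `H`. -/
def inH (g : G3) : Prop :=
  (g : Matrix (Fin 2) (Fin 2) F3) = 1 ∨ (g : Matrix (Fin 2) (Fin 2) F3) = -1 ∨
  (g : Matrix (Fin 2) (Fin 2) F3) = im.1 ∨ (g : Matrix (Fin 2) (Fin 2) F3) = -im.1 ∨
  (g : Matrix (Fin 2) (Fin 2) F3) = jm.1 ∨ (g : Matrix (Fin 2) (Fin 2) F3) = -jm.1 ∨
  (g : Matrix (Fin 2) (Fin 2) F3) = km.1 ∨ (g : Matrix (Fin 2) (Fin 2) F3) = -km.1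

instance : DecidablePred inH := fun g => by unfold inH; infer_instance

lemma inH_one : inH 1 := by decide +kernel
lemma inH_im : inH im := by decide +kernel
lemma inH_jm : inH jm := by decide +kernel
lemma inH_mul : ∀ a b : G3, inH a → inH b → inH (a * b) := by decide +kernel
lemma inH_inv : ∀ a : G3, inH a → inH a⁻¹ := by decide +kernel

lemma inH_cases : ∀ g : G3, inH g →
    g = 1 ∨ g = im * im ∨ g = im ∨ g = im * im * im ∨ g = jm ∨ g = im * im * jm ∨
    g = im * jm ∨ g = jm * im := by decide +kernel

/-- The subgroup with carrier `inH`. -/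
def Ksub : Subgroup G3 where
  carrier := {g | inH g}
  one_mem' := inH_one
  mul_mem' := fun ha hb => inH_mul _ _ ha hb
  inv_mem' := fun ha => inH_inv _ ha

lemma im_mem : im ∈ H3 := Subgroup.subset_closure (by left; rfl)
lemma jm_mem : jm ∈ H3 := Subgroup.subset_closure (by right; rfl)

lemma mem_H3_iff (g : G3) : g ∈ H3 ↔ inH g := by
  constructor
  · intro hg
    have hle : H3 ≤ Ksub := (Subgroup.closure_le _).2 (by
      rintro x (rfl | rfl)
      · exact inH_im
      · exact inH_jm)
    exact hle hg
  · intro hg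
    rcases inH_cases g hg with rfl | rfl | rfl | rfl | rfl | rfl | rfl | rfl
    · exact one_mem _
    · exact mul_mem im_mem im_mem
    · exact im_mem
    · exact mul_mem (mul_mem im_mem im_mem) im_mem
    · exact jm_mem
    · exact mul_mem (mul_mem im_mem im_mem) jm_mem
    · exact mul_mem im_mem jm_mem
    · exact mul_mem jm_mem im_mem

/-- The index of the coset of `g` with respect to the transversal `{1, t, t²}`. -/
def sIdx (g : G3) : Fin 3 := if inH g then 0 else if inH (tm⁻¹ * g) then 1 else 2

lemma decomp : ∀ g : G3, inH ((tm ^ ((sIdx g : ℕ)))⁻¹ * g) := by decide +kernel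

lemma sIdx_unique : ∀ (g : G3) (s : Fin 3), inH ((tm ^ (s : ℕ))⁻¹ * g) → s = sIdx g := by
  decide +kernel

lemma tm_cube : tm ^ 3 = 1 := by decide +kernel

instance keyDec (g : G3) (s : Fin 3) : Decidable (∀ r : Fin 3, rep g s r = if r = sIdx (g * tm ^ (s : ℕ))
    then chi ((tm ^ ((sIdx (g * tm ^ (s : ℕ))) : ℕ))⁻¹ * (g * tm ^ (s : ℕ))) else 0) :=
  Fintype.decidableForallFintype

/-- The key computation: the matrix coefficients of `rep g` in row `s` pick out exactly the
coset representative of `g·tᔆ` with coefficient `χ` of the `H`-part. -/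
lemma key : ∀ (g : G3) (s r : Fin 3),
    rep g s r = if r = sIdx (g * tm ^ (s : ℕ))
      then chi ((tm ^ ((sIdx (g * tm ^ (s : ℕ))) : ℕ))⁻¹ * (g * tm ^ (s : ℕ))) else 0 := by
  decide +kernel

/-- `w0 g` is the image in `𝔽₃³` of the basis vector `e_g` under the retraction. -/
def w0 (g : G3) : Fin 3 → F3 := chi ((tm ^ ((sIdx g : ℕ)))⁻¹ * g) • (Pi.single (sIdx g) 1 : Fin 3 → F3)

lemma w0_mul : ∀ g h : G3, inH h → w0 (g * h) = chi h • w0 g := by decide +kernel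

lemma w0_tm : ∀ s : Fin 3, w0 (tm ^ (s : ℕ)) = Pi.single s 1 := by decide +kernel

/-- The retraction `𝔽₃[G] → 𝔽₃³`. -/
noncomputable def psi0 : FreeG →ₗ[F3] (Fin 3 → F3) :=
  Finsupp.linearCombination F3 w0

lemma psi0_single (g : G3) (c : F3) : psi0 (Finsupp.single g c) = c • w0 g :=
  Finsupp.linearCombination_single _ _ _

lemma IndRel_le_ker : IndRel ≤ LinearMap.ker psi0 := by
  rw [IndRel, Submodule.span_le]
  rintro x ⟨g, h, hh, rfl⟩
  simp only [SetLike.mem_coe, LinearMap.mem_ker, map_sub, _root_.map_smul, psi0_single,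
    one_smul]
  rw [w0_mul g h ((mem_H3_iff h).1 hh), sub_self]

/-- The retraction descends to the induced module. -/
noncomputable def psi : IndW →ₗ[F3] (Fin 3 → F3) := IndRel.liftQ psi0 IndRel_le_ker

lemma psi_mk (u : FreeG) : psi (Submodule.Quotient.mk u) = psi0 u := rfl

lemma phi1_apply (v : Fin 3 → F3) :
    phi1 v = ∑ i : Fin 3, v i •
      (Submodule.Quotient.mk (Finsupp.single (tm ^ (i : ℕ)) (1 : F3)) : IndW) := by
  rw [phi1, LinearMap.sum_apply]
  simp only [LinearMap.smulRight_apply, LinearMap.proj_apply]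

lemma phi1_single (s : Fin 3) : phi1 (Pi.single s 1) =
    Submodule.Quotient.mk (Finsupp.single (tm ^ (s : ℕ)) (1 : F3)) := by
  rw [phi1_apply]
  simp [Pi.single_apply, ite_smul]

lemma rel_mk (g h : G3) (hh : h ∈ H3) :
    (Submodule.Quotient.mk (Finsupp.single (g * h) (1 : F3)) : IndW) =
      chi h • Submodule.Quotient.mk (Finsupp.single g (1 : F3)) := by
  rw [← Submodule.Quotient.mk_smul, Submodule.Quotient.eq]
  exact Submodule.subset_span ⟨g, h, hh, rfl⟩

lemma mk_single_eq (g : G3) :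
    (Submodule.Quotient.mk (Finsupp.single g (1 : F3)) : IndW) =
      chi ((tm ^ ((sIdx g : ℕ)))⁻¹ * g) •
        Submodule.Quotient.mk (Finsupp.single (tm ^ ((sIdx g : ℕ))) (1 : F3)) := by
  conv_lhs => rw [show g = tm ^ ((sIdx g : ℕ)) * ((tm ^ ((sIdx g : ℕ)))⁻¹ * g) by group]
  exact rel_mk _ _ ((mem_H3_iff _).2 (decomp g))

lemma lmul_single (g a : G3) (c : F3) :
    lmul g (Finsupp.single a c) = Finsupp.single (g * a) c := by
  simp [lmul, Finsupp.lmapDomain_apply, Finsupp.mapDomain_single]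

lemma lmul_rel (g : G3) : Submodule.map (lmul g) IndRel ≤ IndRel := by
  rw [IndRel, Submodule.map_span, Submodule.span_le]
  rintro x ⟨y, ⟨g', h, hh, rfl⟩, rfl⟩
  refine Submodule.subset_span ⟨g * g', h, hh, ?_⟩
  simp [map_sub, _root_.map_smul, lmul_single, mul_assoc]

lemma mk_lmul_congr (g : G3) {u u' : FreeG}
    (h : (Submodule.Quotient.mk u : IndW) = Submodule.Quotient.mk u') :
    (Submodule.Quotient.mk (lmul g u) : IndW) = Submodule.Quotient.mk (lmul g u') := by
  rw [Submodule.Quotient.eq] at h ⊢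
  have : lmul g u - lmul g u' = lmul g (u - u') := (map_sub _ _ _).symm
  rw [this]
  exact lmul_rel g ⟨u - u', h, rfl⟩

lemma equiv_basis (g : G3) (s : Fin 3) :
    phi1 (fun r => rep g s r) =
      Submodule.Quotient.mk (Finsupp.single (g * tm ^ (s : ℕ)) (1 : F3)) := by
  rw [phi1_apply, mk_single_eq (g * tm ^ (s : ℕ))]
  simp only [key g s, ite_smul, zero_smul]
  rw [Finset.sum_ite_eq' Finset.univ (sIdx (g * tm ^ (s : ℕ)))]
  simp

/-- `{e, t, t²}` is a left transversal of `H` in `G`, and the map `φ` with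
`φ(x_s) = t^{s-1} ⊗ w` is a `G`-equivariant isomorphism from `M*` onto
`Ind_H^G W = 𝔽₃[G] ⊗_{𝔽₃[H]} W`.  Here `M*` carries the dual conjugation action (in the
dual-basis coordinates, `g` acts by the matrix `(rep g)ᵀ`), and `G` acts on the induced
module by left multiplication on the first factor; equivariance is stated as: whenever
`φ(v)` is the class of `u ∈ 𝔽₃[G]`, then `φ(g • v)` is the class of `g · u`. -/
theorem stmt1 :
    ((tm ^ 3 = 1) ∧ ∀ g : G3, ∃! s : Fin 3, ∃ h ∈ H3, g = tm ^ (s : ℕ) * h) ∧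
    (∀ s : Fin 3, phi1 (Pi.single s 1) =
      Submodule.Quotient.mk (Finsupp.single (tm ^ (s : ℕ)) (1 : F3))) ∧
    Function.Bijective phi1 ∧
    (∀ (g : G3) (v : Fin 3 → F3) (u : FreeG),
      phi1 v = Submodule.Quotient.mk u →
        phi1 ((rep g)ᵀ.mulVec v) = Submodule.Quotient.mk (lmul g u)) := by
  refine ⟨⟨tm_cube, fun g => ?_⟩, phi1_single, ⟨?_, ?_⟩, ?_⟩
  · -- the transversal property
    refine ⟨sIdx g, ⟨(tm ^ ((sIdx g : ℕ)))⁻¹ * g, (mem_H3_iff _).2 (decomp g), by group⟩, ?_⟩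
    rintro s ⟨h, hh, hg⟩
    refine sIdx_unique g s ?_
    rw [hg, inv_mul_cancel_left]
    exact (mem_H3_iff h).1 hh
  · -- injectivity
    have hleft : ∀ v : Fin 3 → F3, psi (phi1 v) = v := by
      intro v
      rw [phi1_apply, map_sum]
      simp only [_root_.map_smul, psi_mk, psi0_single, one_smul, w0_tm]
      simp_rw [← Pi.single_smul, smul_eq_mul, mul_one]
      exact Finset.univ_sum_single v
    exact Function.LeftInverse.injective hleft
  · -- surjectivity
    intro x
    obtain ⟨u, rfl⟩ := Submodule.Quotient.mk_surjective IndRel x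
    induction u using Finsupp.induction_linear with
    | zero => exact ⟨0, by simp⟩
    | add f g hf hg =>
      obtain ⟨v1, h1⟩ := hf
      obtain ⟨v2, h2⟩ := hg
      exact ⟨v1 + v2, by rw [map_add, h1, h2, ← Submodule.Quotient.mk_add]⟩
    | single a b =>
      refine ⟨b • chi ((tm ^ ((sIdx a : ℕ)))⁻¹ * a) • (Pi.single (sIdx a) 1 : Fin 3 → F3), ?_⟩
      rw [_root_.map_smul, _root_.map_smul, phi1_single, ← mk_single_eq,
        ← Submodule.Quotient.mk_smul, Finsupp.smul_single_one]
  · -- equivariance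
    intro g v u hu
    set u0 : FreeG := ∑ s : Fin 3, v s • Finsupp.single (tm ^ (s : ℕ)) (1 : F3) with hu0
    have h0 : (Submodule.Quotient.mk u0 : IndW) = phi1 v := by
      rw [phi1_apply, hu0, ← Submodule.mkQ_apply, map_sum]
      simp only [_root_.map_smul, Submodule.mkQ_apply]
    have hcong := mk_lmul_congr g (hu.symm.trans h0.symm)
    rw [hcong]
    have hl : lmul g u0 = ∑ s : Fin 3, v s • Finsupp.single (g * tm ^ (s : ℕ)) (1 : F3) := by
      rw [hu0, map_sum]
      simp only [_root_.map_smul, lmul_single]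
    rw [hl, ← Submodule.mkQ_apply, map_sum]
    simp only [_root_.map_smul, Submodule.mkQ_apply, ← equiv_basis]
    have hmv : (rep g)ᵀ.mulVec v = ∑ s : Fin 3, v s • (fun r => rep g s r) := by
      funext r
      simp [Matrix.mulVec, dotProduct, Matrix.transpose_apply, Finset.sum_apply,
        mul_comm]
    rw [hmv, map_sum]
    simp only [_root_.map_smul]
end

section
/- The polynomials a₁, a₂, a₃ are algebraically independent over 𝔽₃, and S is a finitely generated module over the subalgebra A = 𝔽₃[a₁,a₂,a₃]; in particular {a₁,a₂,a₃} is a homogeneous system of parameters for S^G. -/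
open Matrix MvPolynomial

set_option synthInstance.maxHeartbeats 1000000
set_option maxHeartbeats 1000000

/-- The subalgebra `A = 𝔽₃[a₁, a₂, a₃] ⊆ S`. -/
noncomputable def Asub : Subalgebra F3 S3 := Algebra.adjoin F3 {a1, a2, a3}

/-! ### Auxiliary material: lex leading-monomial theory for `Fin 3` exponents -/

abbrev Key3 := Lex (ℕ × Lex (ℕ × ℕ))

def key_s3 (μ : Fin 3 →₀ ℕ) : Key3 := toLex (μ 0, toLex (μ 1, μ 2))

lemma key_add (a b : Fin 3 →₀ ℕ) : key_s3 (a + b) = key_s3 a + key_s3 b := by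
  simp only [key_s3, Finsupp.add_apply]; rfl

lemma key_inj : Function.Injective key_s3 := by
  intro a b h
  have h0 : a 0 = b 0 := congrArg (fun p : Key3 => (ofLex p).1) h
  have h1 : a 1 = b 1 := congrArg (fun p : Key3 => (ofLex (ofLex p).2).1) h
  have h2 : a 2 = b 2 := congrArg (fun p : Key3 => (ofLex (ofLex p).2).2) h
  ext i; fin_cases i <;> assumption

/-- `f` has all monomials lex-bounded by `d`, with the coefficient at `d` equal to `1`. -/
def Lead (f : S3) (d : Fin 3 →₀ ℕ) : Prop :=
  (∀ μ, coeff μ f ≠ 0 → key_s3 μ ≤ key_s3 d) ∧ coeff d f = 1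

lemma Lead.mul {f g : S3} {d e : Fin 3 →₀ ℕ} (hf : Lead f d) (hg : Lead g e) :
    Lead (f * g) (d + e) := by
  constructor
  · intro μ hμ
    rw [coeff_mul] at hμ
    obtain ⟨⟨α, β⟩, hab, hne⟩ := Finset.exists_ne_zero_of_sum_ne_zero hμ
    have hα := hf.1 α (fun h => hne (by rw [h, zero_mul]))
    have hβ := hg.1 β (fun h => hne (by rw [h, mul_zero]))
    have hs : α + β = μ := Finset.HasAntidiagonal.mem_antidiagonal.mp hab
    calc key_s3 μ = key_s3 α + key_s3 β := by rw [← hs, key_add]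
      _ ≤ key_s3 d + key_s3 e := add_le_add hα hβ
      _ = key_s3 (d + e) := (key_add _ _).symm
  · rw [coeff_mul, Finset.sum_eq_single_of_mem (d, e) (Finset.HasAntidiagonal.mem_antidiagonal.mpr rfl)]
    · rw [hf.2, hg.2, one_mul]
    · rintro ⟨α, β⟩ hab hne
      by_contra hne0
      have hα := hf.1 α (left_ne_zero_of_mul hne0)
      have hβ := hg.1 β (right_ne_zero_of_mul hne0)
      have hsum : α + β = d + e := Finset.HasAntidiagonal.mem_antidiagonal.mp hab
      have hkey : key_s3 α + key_s3 β = key_s3 d + key_s3 e := by rw [← key_add, hsum, key_add]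
      have hαd : key_s3 α = key_s3 d := by
        rcases lt_or_eq_of_le hα with h | h
        · exact absurd hkey (ne_of_lt (add_lt_add_of_lt_of_le h hβ))
        · exact h
      have hαd' : α = d := key_inj hαd
      have hβe : β = e := by
        subst hαd'
        exact add_left_cancel hsum
      exact hne (by rw [hαd', hβe])

lemma Lead.one : Lead 1 0 := by
  constructor
  · intro μ hμ
    rw [coeff_one] at hμ
    split_ifs at hμ with h
    · subst h; exact le_refl _
    · exact absurd rfl hμ
  · exact coeff_zero_one

lemma Lead.pow {f : S3} {d : Fin 3 →₀ ℕ} (hf : Lead f d) (n : ℕ) : Lead (f ^ n) (n • d) := by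
  induction n with
  | zero => simpa using Lead.one
  | succ n ih =>
    rw [pow_succ, succ_nsmul]
    exact ih.mul hf

lemma lead_monomial (d : Fin 3 →₀ ℕ) : Lead (monomial d (1 : F3)) d := by
  constructor
  · intro μ hμ
    rw [coeff_monomial] at hμ
    split_ifs at hμ with h
    · subst h; exact le_refl _
    · exact absurd rfl hμ
  · simp [coeff_monomial]

lemma lead_of_three (d e f : Fin 3 →₀ ℕ) (he : key_s3 e < key_s3 d) (hf : key_s3 f < key_s3 d) :
    Lead (monomial d (1 : F3) + monomial e 1 + monomial f 1) d := by
  constructor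
  · intro μ hμ
    rw [coeff_add, coeff_add, coeff_monomial, coeff_monomial, coeff_monomial] at hμ
    by_contra hk
    have h1 : ¬ d = μ := fun h => hk (h ▸ le_refl _)
    have h2 : ¬ e = μ := fun h => hk (h ▸ he.le)
    have h3 : ¬ f = μ := fun h => hk (h ▸ hf.le)
    simp [h1, h2, h3] at hμ
  · have h2 : ¬ e = d := fun h => absurd (h ▸ he) (lt_irrefl _)
    have h3 : ¬ f = d := fun h => absurd (h ▸ hf) (lt_irrefl _)
    simp [coeff_monomial, h2, h3]

/-! ### The three polynomials `a1`, `a2`, `e2p` and their leading monomials -/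

/-- `e₂(x₁²,x₂²,x₃²)`, which equals `a₃ - a₁²` in characteristic 3. -/
noncomputable def e2p : S3 := X 0 ^ 2 * X 1 ^ 2 + X 0 ^ 2 * X 2 ^ 2 + X 1 ^ 2 * X 2 ^ 2

noncomputable def da1 : Fin 3 →₀ ℕ := Finsupp.single 0 2
noncomputable def da2 : Fin 3 →₀ ℕ := Finsupp.single 0 1 + Finsupp.single 1 1 + Finsupp.single 2 1
noncomputable def da3 : Fin 3 →₀ ℕ := Finsupp.single 0 2 + Finsupp.single 1 2

noncomputable def D (m : Fin 3 →₀ ℕ) : Fin 3 →₀ ℕ := m 0 • da1 + m 1 • da2 + m 2 • da3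

lemma D_apply (m : Fin 3 →₀ ℕ) :
    D m 0 = 2 * m 0 + m 1 + 2 * m 2 ∧ D m 1 = m 1 + 2 * m 2 ∧ D m 2 = m 1 := by
  refine ⟨?_, ?_, ?_⟩ <;>
    simp [D, da1, da2, da3, Finsupp.add_apply, Finsupp.smul_apply, Finsupp.single_apply] <;> ring

lemma D_inj : Function.Injective D := by
  intro m n h
  have h0 := congrArg (fun f : Fin 3 →₀ ℕ => f 0) h
  have h1 := congrArg (fun f : Fin 3 →₀ ℕ => f 1) h
  have h2 := congrArg (fun f : Fin 3 →₀ ℕ => f 2) h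
  simp only [(D_apply m).1, (D_apply n).1, (D_apply m).2.1, (D_apply n).2.1,
    (D_apply m).2.2, (D_apply n).2.2] at h0 h1 h2
  have e0 : m 0 = n 0 := by omega
  have e1 : m 1 = n 1 := by omega
  have e2 : m 2 = n 2 := by omega
  ext i
  fin_cases i
  exacts [e0, e1, e2]

lemma lead_a1 : Lead a1 da1 := by
  have h : a1 = monomial da1 1 + monomial (Finsupp.single 1 2) 1
      + monomial (Finsupp.single 2 2) 1 := by
    simp [a1, da1, X_pow_eq_monomial]
  rw [h]
  refine lead_of_three _ _ _ ?_ ?_ <;>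
    · simp [key_s3, da1, Finsupp.single_apply]; decide

lemma lead_a2 : Lead a2 da2 := by
  have h : a2 = monomial da2 1 := by simp [a2, da2, X, monomial_mul]
  rw [h]; exact lead_monomial _

lemma lead_e2p : Lead e2p da3 := by
  have h : e2p = monomial da3 1 + monomial (Finsupp.single 0 2 + Finsupp.single 2 2) 1
      + monomial (Finsupp.single 1 2 + Finsupp.single 2 2) 1 := by
    simp [e2p, da3, X_pow_eq_monomial, monomial_mul]
  rw [h]
  refine lead_of_three _ _ _ ?_ ?_ <;>
    · simp [key_s3, da3, Finsupp.single_apply, Finsupp.add_apply]; decide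

lemma lead_W (m : Fin 3 →₀ ℕ) : Lead (a1 ^ m 0 * a2 ^ m 1 * e2p ^ m 2) (D m) :=
  ((lead_a1.pow (m 0)).mul (lead_a2.pow (m 1))).mul (lead_e2p.pow (m 2))

/-- `a₁, a₂, e₂(x²)` are algebraically independent over `𝔽₃`. -/
lemma indep_aux : AlgebraicIndependent F3 ![a1, a2, e2p] := by
  rw [algebraicIndependent_iff]
  intro p hp
  by_contra hp0
  have hrw : aeval ![a1, a2, e2p] p
      = ∑ m ∈ p.support, C (coeff m p) * (a1 ^ m 0 * a2 ^ m 1 * e2p ^ m 2) := by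
    conv_lhs => rw [p.as_sum]
    rw [map_sum]
    refine Finset.sum_congr rfl fun m _ => ?_
    rw [aeval_monomial, algebraMap_eq, Finsupp.prod_pow, Fin.prod_univ_three]
    simp [mul_assoc]
  obtain ⟨m0, hm0, hmax⟩ := Finset.exists_max_image p.support (fun m => key_s3 (D m))
    (Finset.nonempty_iff_ne_empty.mpr (by rwa [Ne, MvPolynomial.support_eq_empty]))
  have hco : coeff (D m0) (aeval ![a1, a2, e2p] p) = coeff m0 p := by
    rw [hrw, coeff_sum, Finset.sum_eq_single_of_mem m0 hm0]
    · rw [coeff_C_mul, (lead_W m0).2, mul_one]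
    · intro m hm hne
      rw [coeff_C_mul]
      have hz : coeff (D m0) (a1 ^ m 0 * a2 ^ m 1 * e2p ^ m 2) = 0 := by
        by_contra h
        have h1 := (lead_W m).1 _ h
        have h2 := hmax m hm
        exact hne (D_inj (key_inj (le_antisymm h2 h1)))
      rw [hz, mul_zero]
  rw [hp] at hco
  simp only [coeff_zero] at hco
  exact (mem_support_iff.mp hm0) hco.symm

/-! ### Characteristic-3 identities -/

lemma h3S : (3 : S3) = 0 := by
  have := CharP.cast_eq_zero S3 3
  simpa using this

lemma ha3 : a3 = a1 ^ 2 + e2p := by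
  unfold a3 a1 e2p
  linear_combination (-(X 0 ^ 2 * X 1 ^ 2 + X 0 ^ 2 * X 2 ^ 2 + X 1 ^ 2 * X 2 ^ 2) : S3) * h3S

lemma part1 : AlgebraicIndependent F3 av := by
  rw [algebraicIndependent_iff]
  intro p hp
  set u : Fin 3 → MvPolynomial (Fin 3) F3 := ![X 0, X 1, X 0 ^ 2 + X 2] with hu
  have hkey : aeval ![a1, a2, e2p] (bind₁ u p) = 0 := by
    rw [aeval_bind₁]
    have : (fun i => aeval ![a1, a2, e2p] (u i)) = av := by
      funext i
      fin_cases i <;> simp [hu, av, ha3]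
    rw [this, hp]
  have h0 : bind₁ u p = 0 := by
    exact algebraicIndependent_iff.mp indep_aux _ hkey
  have hrec : bind₁ ![X 0, X 1, X 2 - (X 0 : MvPolynomial (Fin 3) F3) ^ 2] (bind₁ u p) = p := by
    rw [bind₁_bind₁]
    have : (fun i => bind₁ ![X 0, X 1, X 2 - (X 0 : MvPolynomial (Fin 3) F3) ^ 2] (u i))
        = (X : Fin 3 → MvPolynomial (Fin 3) F3) := by
      funext i
      fin_cases i <;> simp [hu]
    rw [this, bind₁_X_left, AlgHom.id_apply]
  rw [h0, map_zero] at hrec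
  exact hrec.symm

/-! ### Integrality of the variables over `Asub` -/

lemma a1_mem : a1 ∈ Asub := Algebra.subset_adjoin (by simp)
lemma a2_mem : a2 ∈ Asub := Algebra.subset_adjoin (by simp)
lemma a3_mem : a3 ∈ Asub := Algebra.subset_adjoin (by simp)

noncomputable def A1 : Asub := ⟨a1, a1_mem⟩
noncomputable def A2 : Asub := ⟨a2, a2_mem⟩
noncomputable def A3 : Asub := ⟨a3, a3_mem⟩

noncomputable def intPoly : Polynomial Asub :=
  Polynomial.X ^ 6 + (Polynomial.C (-A1) * Polynomial.X ^ 4 +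
    (Polynomial.C (A3 - A1 ^ 2) * Polynomial.X ^ 2 + Polynomial.C (-(A2 ^ 2))))

lemma intPoly_monic : intPoly.Monic := by
  unfold intPoly
  apply Polynomial.monic_X_pow_add
  refine lt_of_le_of_lt ?_ (by norm_num : (5 : WithBot ℕ) < 6)
  compute_degree
  all_goals norm_num

lemma X_isIntegral (i : Fin 3) : IsIntegral Asub (X i : S3) := by
  refine ⟨intPoly, intPoly_monic, ?_⟩
  have hmap : ∀ c : Asub, algebraMap Asub S3 c = (c : S3) := fun c => rfl
  show Polynomial.eval₂ (algebraMap Asub S3) (X i) intPoly = 0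
  simp only [intPoly, Polynomial.eval₂_add, Polynomial.eval₂_mul, Polynomial.eval₂_pow,
    Polynomial.eval₂_X, Polynomial.eval₂_C, hmap]
  have c1 : ((-A1 : Asub) : S3) = -a1 := rfl
  have c2 : ((A3 - A1 ^ 2 : Asub) : S3) = a3 - a1 ^ 2 := rfl
  have c3 : ((-(A2 ^ 2) : Asub) : S3) = -(a2 ^ 2) := rfl
  rw [c1, c2, c3]
  fin_cases i
  · show (X 0 : S3) ^ 6 + (-a1 * X 0 ^ 4 + ((a3 - a1 ^ 2) * X 0 ^ 2 + -(a2 ^ 2))) = 0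
    unfold a1 a2 a3
    linear_combination
      (-(X 0 ^ 4 * X 1 ^ 2 + X 0 ^ 4 * X 2 ^ 2 + X 0 ^ 2 * X 1 ^ 2 * X 2 ^ 2) : S3) * h3S
  · show (X 1 : S3) ^ 6 + (-a1 * X 1 ^ 4 + ((a3 - a1 ^ 2) * X 1 ^ 2 + -(a2 ^ 2))) = 0
    unfold a1 a2 a3
    linear_combination
      (-(X 1 ^ 4 * X 0 ^ 2 + X 1 ^ 4 * X 2 ^ 2 + X 0 ^ 2 * X 1 ^ 2 * X 2 ^ 2) : S3) * h3S
  · show (X 2 : S3) ^ 6 + (-a1 * X 2 ^ 4 + ((a3 - a1 ^ 2) * X 2 ^ 2 + -(a2 ^ 2))) = 0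
    unfold a1 a2 a3
    linear_combination
      (-(X 2 ^ 4 * X 0 ^ 2 + X 2 ^ 4 * X 1 ^ 2 + X 0 ^ 2 * X 1 ^ 2 * X 2 ^ 2) : S3) * h3S

lemma adjoin_X_top : Algebra.adjoin Asub ({X 0, X 1, X 2} : Set S3) = ⊤ := by
  rw [eq_top_iff]
  intro x _
  have hr : Set.range (X : Fin 3 → S3) = {X 0, X 1, X 2} := by
    ext y
    simp only [Set.mem_range, Set.mem_insert_iff, Set.mem_singleton_iff]
    constructor
    · rintro ⟨i, rfl⟩; fin_cases i <;> simp
    · rintro (rfl | rfl | rfl)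
      exacts [⟨0, rfl⟩, ⟨1, rfl⟩, ⟨2, rfl⟩]
  have hx : x ∈ Algebra.adjoin F3 ({X 0, X 1, X 2} : Set S3) := by
    rw [← hr, adjoin_range_X]; trivial
  have hle : Algebra.adjoin F3 ({X 0, X 1, X 2} : Set S3) ≤
      Subalgebra.restrictScalars F3 (Algebra.adjoin Asub ({X 0, X 1, X 2} : Set S3)) :=
    Algebra.adjoin_le fun y hy => Algebra.subset_adjoin hy
  exact hle hx

lemma part2 : Module.Finite Asub S3 := by
  have hfg := fg_adjoin_of_finite (R := Asub) (Set.toFinite ({X 0, X 1, X 2} : Set S3)) ?_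
  · constructor
    rwa [adjoin_X_top, Algebra.top_toSubmodule] at hfg
  · rintro x (rfl | rfl | rfl)
    exacts [X_isIntegral 0, X_isIntegral 1, X_isIntegral 2]

lemma Asub_fg : Asub.FG := by
  classical
  exact ⟨{a1, a2, a3}, by simp [Asub]⟩

lemma part3 : (Submodule.span Asub {f : S3 | ∀ g : G3, actS g f = f}).FG := by
  have hft : Algebra.FiniteType F3 Asub := (Subalgebra.fg_iff_finiteType Asub).mp Asub_fg
  haveI hn : IsNoetherianRing Asub := by
    have := hft
    exact Algebra.FiniteType.isNoetherianRing F3 Asub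
  haveI := part2
  haveI : IsNoetherian Asub S3 := isNoetherian_of_isNoetherianRing_of_finite Asub S3
  exact IsNoetherian.noetherian _

/-- `a₁, a₂, a₃` are algebraically independent over `𝔽₃`, and `S` is a finitely generated
module over `A = 𝔽₃[a₁,a₂,a₃]`; in particular (third conjunct) the invariant ring `S^G`
is a finitely generated `A`-module, i.e. `{a₁, a₂, a₃}` is a homogeneous system of
parameters for `S^G`. -/
theorem stmt3 :
    AlgebraicIndependent F3 av ∧
    Module.Finite Asub S3 ∧
    (Submodule.span Asub {f : S3 | ∀ g : G3, actS g f = f}).FG := by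
  exact ⟨part1, part2, part3⟩
end

section
/- For every integer d ≥ 1, the 𝔽₃-dimension of the space of homogeneous polynomials of degree d in S that are χ-relative H-invariants equals the binomial coefficient C(⌊(d+1)/2⌋ + 1, 2), and for d = 0 this space is zero. Equivalently, the Hilbert series Σ_{d≥0} dim((S^H_χ)_d) t^d equals (t + t²)/(1 − t²)³ as a formal power series. -/
open Matrix MvPolynomial

set_option synthInstance.maxHeartbeats 1000000
set_option maxHeartbeats 1000000

set_option maxRecDepth 100000
section Aux

/-- diagonal substitution -/
noncomputable def dact (ε : Fin 3 → F3) : S3 →ₐ[F3] S3 :=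
  MvPolynomial.aeval fun s => MvPolynomial.C (ε s) * MvPolynomial.X s

lemma rep_im : rep im = !![1,0,0;0,-1,0;0,0,-1] := by decide
lemma rep_jm : rep jm = !![-1,0,0;0,-1,0;0,0,1] := by decide

lemma actS_im : actS im = dact ![1,-1,-1] := by
  unfold actS dact
  congr 1
  funext s
  fin_cases s <;>
    simp [rep_im, Fin.sum_univ_three, MvPolynomial.smul_eq_C_mul]

lemma actS_jm : actS jm = dact ![-1,-1,1] := by
  unfold actS dact
  congr 1
  funext s
  fin_cases s <;>
    simp [rep_jm, Fin.sum_univ_three, MvPolynomial.smul_eq_C_mul]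

lemma dact_monomial (ε : Fin 3 → F3) (u : Fin 3 →₀ ℕ) (c : F3) :
    dact ε (monomial u c) = monomial u ((∏ i, ε i ^ u i) * c) := by
  have hsupp : (∏ i, ε i ^ u i) = ∏ i ∈ u.support, ε i ^ u i := by
    refine (Finset.prod_subset (Finset.subset_univ _) ?_).symm
    intro i _ hi
    rw [Finsupp.notMem_support_iff.mp hi, pow_zero]
  rw [dact, aeval_monomial, monomial_eq, hsupp]
  rw [Finsupp.prod, Finsupp.prod]
  simp only [mul_pow, ← MvPolynomial.C_pow]
  rw [Finset.prod_mul_distrib, ← map_prod, MvPolynomial.algebraMap_eq, _root_.map_mul]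
  ring

end Aux
lemma coeff_dact (ε : Fin 3 → F3) (f : S3) (m : Fin 3 →₀ ℕ) :
    coeff m (dact ε f) = (∏ i, ε i ^ m i) * coeff m f := by
  induction f using MvPolynomial.induction_on' with
  | monomial u c =>
    rw [dact_monomial, coeff_monomial, coeff_monomial]
    split_ifs with h
    · subst h; rfl
    · rw [mul_zero]
  | add p q hp hq =>
    rw [map_add, coeff_add, coeff_add, hp, hq, mul_add]

/-- decomposition of traceless matrices in the basis V (valid in char 3). -/
lemma decompV' : ∀ a b c : F3,
    (∑ s : Fin 3, coordM s !![a, b; c, -a] • V s) = !![a, b; c, -a] := by decide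

lemma decompV (X : Matrix (Fin 2) (Fin 2) F3) (hX : X 1 1 = - X 0 0) :
    (∑ s : Fin 3, coordM s X • V s) = X := by
  have hXe : X = !![X 0 0, X 0 1; X 1 0, -(X 0 0)] := by
    ext i j
    fin_cases i <;> fin_cases j <;> simp [hX]
  rw [hXe]
  exact decompV' _ _ _

lemma coordM_sum (s : Fin 3) (c : Fin 3 → F3) (M : Fin 3 → Matrix (Fin 2) (Fin 2) F3) :
    coordM s (∑ r : Fin 3, c r • M r) = ∑ r : Fin 3, c r * coordM s (M r) := by
  fin_cases s <;>
    simp [coordM, Fin.sum_univ_three, Matrix.add_apply, Matrix.smul_apply, smul_eq_mul] <;>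
    ring

lemma conj_traceless (g : G3) (r : Fin 3) :
    (((g⁻¹ : G3) : Matrix (Fin 2) (Fin 2) F3) * V r * (g : Matrix (Fin 2) (Fin 2) F3)) 1 1
      = - (((g⁻¹ : G3) : Matrix (Fin 2) (Fin 2) F3) * V r
            * (g : Matrix (Fin 2) (Fin 2) F3)) 0 0 := by
  have htr : Matrix.trace (((g⁻¹ : G3) : Matrix (Fin 2) (Fin 2) F3) * V r
      * (g : Matrix (Fin 2) (Fin 2) F3)) = 0 := by
    rw [Matrix.trace_mul_comm, ← mul_assoc]
    have h1 : (g : Matrix (Fin 2) (Fin 2) F3) * ((g⁻¹ : G3) : Matrix (Fin 2) (Fin 2) F3)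
        = 1 := by
      rw [← Matrix.SpecialLinearGroup.coe_mul, mul_inv_cancel]
      rfl
    rw [h1, one_mul]
    revert r; decide
  rw [Matrix.trace_fin_two] at htr
  linear_combination htr

lemma conj_decomp (g : G3) (r : Fin 3) :
    (((g⁻¹ : G3) : Matrix (Fin 2) (Fin 2) F3) * V r * (g : Matrix (Fin 2) (Fin 2) F3))
      = ∑ s : Fin 3, rep g s r • V s := by
  exact (decompV _ (conj_traceless g r)).symm

lemma rep_mul (g h : G3) : rep (g * h) = rep h * rep g := by
  ext s t
  have h1 : (((g * h)⁻¹ : G3) : Matrix (Fin 2) (Fin 2) F3) * V t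
        * ((g * h : G3) : Matrix (Fin 2) (Fin 2) F3)
      = ((h⁻¹ : G3) : Matrix (Fin 2) (Fin 2) F3)
          * (((g⁻¹ : G3) : Matrix (Fin 2) (Fin 2) F3) * V t
            * (g : Matrix (Fin 2) (Fin 2) F3)) * (h : Matrix (Fin 2) (Fin 2) F3) := by
    rw [_root_.mul_inv_rev]
    simp only [Matrix.SpecialLinearGroup.coe_mul]
    noncomm_ring
  have h2 : rep (g * h) s t
      = coordM s (((h⁻¹ : G3) : Matrix (Fin 2) (Fin 2) F3) * (∑ r : Fin 3, rep g r t • V r)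
          * (h : Matrix (Fin 2) (Fin 2) F3)) := by
    rw [rep]
    simp only [Matrix.of_apply]
    rw [h1, conj_decomp]
  rw [h2]
  have h3 : ((h⁻¹ : G3) : Matrix (Fin 2) (Fin 2) F3) * (∑ r : Fin 3, rep g r t • V r)
      * (h : Matrix (Fin 2) (Fin 2) F3)
      = ∑ r : Fin 3, rep g r t • (((h⁻¹ : G3) : Matrix (Fin 2) (Fin 2) F3) * V r
          * (h : Matrix (Fin 2) (Fin 2) F3)) := by
    rw [Finset.mul_sum, Finset.sum_mul]
    congr 1; funext r
    rw [Matrix.mul_smul, Matrix.smul_mul]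
  rw [h3, coordM_sum]
  rw [Matrix.mul_apply, Fin.sum_univ_three, Fin.sum_univ_three]
  simp only [rep, Matrix.of_apply]
  ring
lemma actS_mul (g h : G3) (f : S3) : actS (g * h) f = actS g (actS h f) := by
  have key : (actS g).comp (actS h) = actS (g * h) := by
    rw [actS, actS, comp_aeval]
    congr 1
    funext s
    rw [map_sum]
    simp only [_root_.map_smul, aeval_X, actS]
    simp only [Finset.smul_sum, smul_smul]
    rw [Finset.sum_comm, rep_mul]
    simp only [Matrix.mul_apply]
    congr 1; funext r
    rw [Finset.sum_smul]
  rw [← key]; rfl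

lemma rep_one : rep 1 = 1 := by decide

lemma actS_one (f : S3) : actS 1 f = f := by
  have : actS (1 : G3) = aeval X := by
    rw [actS]
    congr 1
    funext s
    rw [rep_one]
    fin_cases s <;> simp [Fin.sum_univ_three, Matrix.one_apply]
  rw [this, aeval_X_left_apply]

/-- the eight matrices of the quaternion group -/
def Qlist : List (Matrix (Fin 2) (Fin 2) F3) :=
  [1, -1, !![0,1;-1,0], -(!![0,1;-1,0]), !![1,-1;-1,-1], -(!![1,-1;-1,-1]),
   !![-1,-1;-1,1], -(!![-1,-1;-1,1])]

def chiM (A : Matrix (Fin 2) (Fin 2) F3) : F3 :=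
  if A = 1 ∨ A = -1 ∨ A = !![0,1;-1,0] ∨ A = -(!![0,1;-1,0]) then 1 else -1

lemma chi_eq (g : G3) : chi g = chiM (g : Matrix (Fin 2) (Fin 2) F3) := rfl

lemma chiM_mul : ∀ a ∈ Qlist, ∀ b ∈ Qlist, chiM (a * b) = chiM a * chiM b := by decide

lemma Qlist_mul : ∀ a ∈ Qlist, ∀ b ∈ Qlist, a * b ∈ Qlist := by decide

lemma Qlist_pow4 : ∀ a ∈ Qlist, a * (a * (a * a)) = 1 := by decide

lemma chiM_sq : ∀ a : Matrix (Fin 2) (Fin 2) F3, chiM a * chiM a = 1 := by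
  intro a
  rw [chiM]
  split_ifs <;> decide

lemma mem_relInv_iff (f : S3) :
    f ∈ relInv ↔ (dact ![1,-1,-1] f = f ∧ dact ![-1,-1,1] f = -f) := by
  constructor
  · intro hf
    have him : im ∈ H3 := Subgroup.subset_closure (by simp)
    have hjm : jm ∈ H3 := Subgroup.subset_closure (by simp)
    have h1 := hf im him
    have h2 := hf jm hjm
    rw [actS_im] at h1
    rw [actS_jm] at h2
    have c1 : chi im = 1 := by
      rw [chi_eq]; decide
    have c2 : chi jm = -1 := by
      rw [chi_eq]; decide
    rw [c1, one_smul] at h1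
    rw [c2, neg_one_smul] at h2
    exact ⟨h1, h2⟩
  · rintro ⟨h1, h2⟩ h hh
    have key : ∀ x ∈ H3, ((x : Matrix (Fin 2) (Fin 2) F3) ∈ Qlist
        ∧ actS x f = chi x • f) := by
      intro x hx
      induction hx using Subgroup.closure_induction with
      | mem y hy =>
        rcases hy with hy | hy
        · subst hy
          refine ⟨by decide, ?_⟩
          rw [actS_im, h1, chi_eq, show chiM (im : Matrix (Fin 2) (Fin 2) F3) = 1 by decide,
            one_smul]
        · subst hy
          refine ⟨by decide, ?_⟩
          rw [actS_jm, h2, chi_eq, show chiM (jm : Matrix (Fin 2) (Fin 2) F3) = -1 by decide,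
            neg_one_smul]
      | one =>
        refine ⟨by decide, ?_⟩
        rw [actS_one, chi_eq, show chiM ((1 : G3) : Matrix (Fin 2) (Fin 2) F3) = 1 by decide,
          one_smul]
      | mul x y _ _ ihx ihy =>
        obtain ⟨qx, ax⟩ := ihx
        obtain ⟨qy, ay⟩ := ihy
        have hco : ((x * y : G3) : Matrix (Fin 2) (Fin 2) F3)
            = (x : Matrix (Fin 2) (Fin 2) F3) * (y : Matrix (Fin 2) (Fin 2) F3) := rfl
        refine ⟨by rw [hco]; exact Qlist_mul _ qx _ qy, ?_⟩
        have hchi : chi (x * y) = chi x * chi y := by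
          rw [chi_eq (x * y), hco, chiM_mul _ qx _ qy, chi_eq x, chi_eq y]
        rw [actS_mul, ay, _root_.map_smul, ax, hchi, smul_smul, mul_comm]
      | inv x _ ihx =>
        obtain ⟨qx, ax⟩ := ihx
        have hx4 : x * (x * (x * x)) = 1 := by
          apply Subtype.ext
          push_cast
          exact Qlist_pow4 _ qx
        have hinv : x⁻¹ = x * (x * x) := by
          rw [← mul_one x⁻¹, ← hx4, ← mul_assoc, inv_mul_cancel, one_mul]
        have hq2 : (x : Matrix (Fin 2) (Fin 2) F3) * (x : Matrix (Fin 2) (Fin 2) F3)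
            ∈ Qlist := Qlist_mul _ qx _ qx
        have hq3 : (x : Matrix (Fin 2) (Fin 2) F3) * ((x : Matrix (Fin 2) (Fin 2) F3)
            * (x : Matrix (Fin 2) (Fin 2) F3)) ∈ Qlist := Qlist_mul _ qx _ hq2
        have step : ∀ c : F3, actS x (c • f) = c • chi x • f := by
          intro c; rw [_root_.map_smul, ax]
        have hco2 : ((x * (x * x) : G3) : Matrix (Fin 2) (Fin 2) F3)
            = (x : Matrix (Fin 2) (Fin 2) F3) * ((x : Matrix (Fin 2) (Fin 2) F3)
              * (x : Matrix (Fin 2) (Fin 2) F3)) := rfl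
        have hchi3 : chi (x * (x * x)) = chi x * (chi x * chi x) := by
          rw [chi_eq (x * (x * x)), hco2, chiM_mul _ qx _ hq2, chiM_mul _ qx _ qx,
            chi_eq x]
        constructor
        · rw [hinv]; rw [show ((x * (x * x) : G3) : Matrix (Fin 2) (Fin 2) F3)
            = (x : Matrix (Fin 2) (Fin 2) F3) * ((x : Matrix (Fin 2) (Fin 2) F3)
              * (x : Matrix (Fin 2) (Fin 2) F3)) from rfl]; exact hq3
        · rw [hinv, actS_mul, actS_mul, ax, step, smul_smul, step, smul_smul, hchi3]
          congr 1
          have hsq := chiM_sq (x : Matrix (Fin 2) (Fin 2) F3)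
          rw [chi_eq x]
          rw [hsq, one_mul, mul_one]
    have := key h hh
    exact this.2
def goodm (m : Fin 3 →₀ ℕ) : Prop := (m 1 + m 2) % 2 = 0 ∧ (m 0 + m 1) % 2 = 1

instance : DecidablePred goodm := fun m => instDecidableAnd

lemma sign_prod_i (m : Fin 3 →₀ ℕ) :
    (∏ i, (![1,-1,-1] : Fin 3 → F3) i ^ m i) = if (m 1 + m 2) % 2 = 0 then 1 else -1 := by
  rw [Fin.prod_univ_three]
  simp only [Matrix.cons_val_zero, Matrix.cons_val_one, Matrix.head_cons, one_pow, one_mul,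
    Matrix.cons_val_two, Matrix.tail_cons]
  rw [← pow_add]
  rcases Nat.even_or_odd (m 1 + m 2) with h | h
  · rw [h.neg_one_pow, if_pos (Nat.even_iff.mp h)]
  · rw [h.neg_one_pow, if_neg (by have := Nat.odd_iff.mp h; omega)]

lemma sign_prod_j (m : Fin 3 →₀ ℕ) :
    (∏ i, (![-1,-1,1] : Fin 3 → F3) i ^ m i) = if (m 0 + m 1) % 2 = 0 then 1 else -1 := by
  rw [Fin.prod_univ_three]
  simp only [Matrix.cons_val_zero, Matrix.cons_val_one, Matrix.head_cons, one_pow, mul_one,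
    Matrix.cons_val_two, Matrix.tail_cons]
  rw [← pow_add]
  rcases Nat.even_or_odd (m 0 + m 1) with h | h
  · rw [h.neg_one_pow, if_pos (Nat.even_iff.mp h)]
  · rw [h.neg_one_pow, if_neg (by have := Nat.odd_iff.mp h; omega)]

lemma mem_relInv_iff_coeff (f : S3) :
    f ∈ relInv ↔ ∀ m : Fin 3 →₀ ℕ, coeff m f ≠ 0 → goodm m := by
  rw [mem_relInv_iff]
  constructor
  · rintro ⟨hi, hj⟩ m hm
    have e1 : coeff m (dact ![1,-1,-1] f) = coeff m f := by rw [hi]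
    have e2 : coeff m (dact ![-1,-1,1] f) = - coeff m f := by rw [hj, coeff_neg]
    rw [coeff_dact, sign_prod_i] at e1
    rw [coeff_dact, sign_prod_j] at e2
    constructor
    · by_contra hpar
      rw [if_neg hpar] at e1
      revert e1 hm
      generalize coeff m f = c
      revert c; decide
    · by_contra hpar
      have hpar' : (m 0 + m 1) % 2 = 0 := by omega
      rw [if_pos hpar'] at e2
      revert e2 hm
      generalize coeff m f = c
      revert c; decide
  · intro hg
    constructor
    · apply MvPolynomial.ext
      intro m
      rw [coeff_dact, sign_prod_i]
      by_cases hc : coeff m f = 0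
      · simp [hc]
      · rw [if_pos (hg m hc).1, one_mul]
    · apply MvPolynomial.ext
      intro m
      rw [coeff_dact, sign_prod_j, coeff_neg]
      by_cases hc : coeff m f = 0
      · simp [hc]
      · rw [if_neg (by have := (hg m hc).2; omega), neg_one_mul]
/-- good exponent functions of degree d -/
def Bfun (d : ℕ) : Finset (Fin 3 → ℕ) :=
  (Finset.Nat.antidiagonalTuple 3 d).filter
    (fun x => (x 1 + x 2) % 2 = 0 ∧ (x 0 + x 1) % 2 = 1)

/-- good monomials of degree d -/
noncomputable def Bfin (d : ℕ) : Finset (Fin 3 →₀ ℕ) :=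
  (Bfun d).map (Finsupp.equivFunOnFinite.symm.toEmbedding)

lemma degree_eq_sum (m : Fin 3 →₀ ℕ) : m.degree = ∑ i, m i := by
  rw [Finsupp.degree]
  exact Finset.sum_subset (Finset.subset_univ _)
    (fun i _ hi => Finsupp.notMem_support_iff.mp hi)

lemma mem_Bfin {d : ℕ} {m : Fin 3 →₀ ℕ} :
    m ∈ Bfin d ↔ ((∑ i, m i) = d ∧ goodm m) := by
  rw [Bfin, Finset.mem_map]
  constructor
  · rintro ⟨x, hx, rfl⟩
    rw [Bfun, Finset.mem_filter, Finset.Nat.mem_antidiagonalTuple] at hx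
    obtain ⟨h1, h2, h3⟩ := hx
    exact ⟨by simpa using h1, by simpa using h2, by simpa using h3⟩
  · rintro ⟨h1, h2, h3⟩
    refine ⟨⇑m, ?_, by simp⟩
    rw [Bfun, Finset.mem_filter, Finset.Nat.mem_antidiagonalTuple]
    exact ⟨h1, h2, h3⟩

lemma weight_one_eq (m : Fin 3 →₀ ℕ) : (Finsupp.weight (1 : Fin 3 → ℕ)) m = ∑ i, m i := by
  rw [Finsupp.weight_apply, Finsupp.sum]
  simp only [Pi.one_apply, smul_eq_mul, mul_one]
  exact Finset.sum_subset (Finset.subset_univ _)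
    (fun i _ hi => Finsupp.notMem_support_iff.mp hi)

lemma mem_inf_iff (d : ℕ) (f : S3) :
    f ∈ (homogeneousSubmodule (Fin 3) F3 d ⊓ relInv) ↔
      ∀ m : Fin 3 →₀ ℕ, coeff m f ≠ 0 → m ∈ Bfin d := by
  rw [Submodule.mem_inf, mem_homogeneousSubmodule, mem_relInv_iff_coeff]
  constructor
  · rintro ⟨hh, hr⟩ m hm
    rw [mem_Bfin]
    have h1 := hh hm
    rw [weight_one_eq] at h1
    exact ⟨h1, hr m hm⟩
  · intro hb
    constructor
    · intro m hm
      rw [weight_one_eq]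
      exact (mem_Bfin.mp (hb m hm)).1
    · intro m hm
      exact (mem_Bfin.mp (hb m hm)).2
noncomputable def toFunc (d : ℕ) :
    ↥(homogeneousSubmodule (Fin 3) F3 d ⊓ relInv) →ₗ[F3] (↥(Bfin d) → F3) where
  toFun f := fun m => coeff (↑m) f.1
  map_add' f g := by funext m; simp
  map_smul' c f := by funext m; simp

lemma toFunc_bijective (d : ℕ) : Function.Bijective (toFunc d) := by
  constructor
  · rw [injective_iff_map_eq_zero]
    intro f hf
    apply Subtype.ext
    apply MvPolynomial.ext
    intro m
    rw [ZeroMemClass.coe_zero, coeff_zero]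
    by_cases hm : m ∈ Bfin d
    · exact congrFun hf ⟨m, hm⟩
    · by_contra hc
      exact hm ((mem_inf_iff d f.1).mp f.2 m hc)
  · intro c
    set f : S3 := ∑ m ∈ (Bfin d).attach, monomial (↑m) (c m) with hf
    have hcoeff : ∀ u : Fin 3 →₀ ℕ, coeff u f
        = if hu : u ∈ Bfin d then c ⟨u, hu⟩ else 0 := by
      intro u
      rw [hf]
      rw [MvPolynomial.coeff_sum]
      split_ifs with hu
      · rw [Finset.sum_eq_single ⟨u, hu⟩]
        · rw [coeff_monomial, if_pos rfl]
        · intro b _ hb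
          rw [coeff_monomial, if_neg]
          intro hbu
          exact hb (Subtype.ext hbu)
        · intro habs
          exact absurd (Finset.mem_attach _ _) habs
      · apply Finset.sum_eq_zero
        intro b _
        rw [coeff_monomial, if_neg]
        intro hbu
        rw [← hbu] at hu
        exact hu b.2
    have hmem : f ∈ (homogeneousSubmodule (Fin 3) F3 d ⊓ relInv) := by
      rw [mem_inf_iff]
      intro m hm
      rw [hcoeff m] at hm
      by_cases hmb : m ∈ Bfin d
      · exact hmb
      · rw [dif_neg hmb] at hm; exact absurd rfl hm
    refine ⟨⟨f, hmem⟩, ?_⟩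
    funext m
    show coeff (↑m) f = c m
    rw [hcoeff, dif_pos m.2]

lemma finrank_eq_card (d : ℕ) :
    Module.finrank F3 ↥(homogeneousSubmodule (Fin 3) F3 d ⊓ relInv) = (Bfun d).card := by
  have e := LinearEquiv.ofBijective (toFunc d) (toFunc_bijective d)
  rw [e.finrank_eq, Module.finrank_fintype_fun_eq_card, Fintype.card_coe, Bfin,
    Finset.card_map]
lemma mem_Bfun (d : ℕ) (x : Fin 3 → ℕ) :
    x ∈ Bfun d ↔ (x 0 + x 1 + x 2 = d ∧ (x 1 + x 2) % 2 = 0 ∧ (x 0 + x 1) % 2 = 1) := by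
  rw [Bfun, Finset.mem_filter, Finset.Nat.mem_antidiagonalTuple, Fin.sum_univ_three]

lemma vec0 (a b c : ℕ) : (![a, b, c] : Fin 3 → ℕ) 0 = a := rfl
lemma vec1 (a b c : ℕ) : (![a, b, c] : Fin 3 → ℕ) 1 = b := rfl
lemma vec2 (a b c : ℕ) : (![a, b, c] : Fin 3 → ℕ) 2 = c := rfl

lemma pair_min' {p q : ℕ} (h : p < q) (hne : ({p, q} : Finset ℕ).Nonempty) :
    ({p, q} : Finset ℕ).min' hne = p := by
  apply le_antisymm
  · exact Finset.min'_le _ _ (by simp)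
  · apply Finset.le_min'
    intro y hy
    rw [Finset.mem_insert, Finset.mem_singleton] at hy
    omega

lemma pair_max' {p q : ℕ} (h : p < q) (hne : ({p, q} : Finset ℕ).Nonempty) :
    ({p, q} : Finset ℕ).max' hne = q := by
  apply le_antisymm
  · apply Finset.max'_le
    intro y hy
    rw [Finset.mem_insert, Finset.mem_singleton] at hy
    omega
  · exact Finset.le_max' _ _ (by simp)

lemma eq_pair_of_card_two {S : Finset ℕ} (h : S.card = 2) (hne : S.Nonempty) :
    S = {S.min' hne, S.max' hne} := by
  have hlt : S.min' hne < S.max' hne :=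
    Finset.min'_lt_max'_of_card (s := S) (by omega)
  refine (Finset.eq_of_subset_of_card_le ?_ ?_).symm
  · intro y hy
    rw [Finset.mem_insert, Finset.mem_singleton] at hy
    rcases hy with rfl | rfl
    · exact S.min'_mem hne
    · exact S.max'_mem hne
  · rw [h, Finset.card_insert_of_notMem (by rw [Finset.mem_singleton]; omega),
      Finset.card_singleton]

def itrip (x : Fin 3 → ℕ) : Finset ℕ := {x 1 / 2, x 1 / 2 + x 2 / 2 + 1}

lemma itrip_min (x : Fin 3 → ℕ) (h : (itrip x).Nonempty) : (itrip x).min' h = x 1 / 2 :=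
  pair_min' (by omega) h

lemma itrip_max (x : Fin 3 → ℕ) (h : (itrip x).Nonempty) :
    (itrip x).max' h = x 1 / 2 + x 2 / 2 + 1 :=
  pair_max' (by omega) h

lemma itrip_card (x : Fin 3 → ℕ) : (itrip x).card = 2 := by
  rw [itrip, Finset.card_insert_of_notMem (by rw [Finset.mem_singleton]; omega),
    Finset.card_singleton]

lemma powerset_ne {m : ℕ} {S : Finset ℕ} (hS : S ∈ Finset.powersetCard 2 (Finset.range m)) :
    S.Nonempty := by
  rw [Finset.mem_powersetCard] at hS
  exact Finset.card_pos.mp (by omega)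

lemma itrip_mem {d m : ℕ} (hdm : d ≤ 2 * m + 2) (x : Fin 3 → ℕ) (hx : x ∈ Bfun d) :
    itrip x ∈ Finset.powersetCard 2 (Finset.range (m + 2)) := by
  rw [mem_Bfun] at hx
  rw [Finset.mem_powersetCard]
  refine ⟨?_, itrip_card x⟩
  intro y hy
  rw [itrip, Finset.mem_insert, Finset.mem_singleton] at hy
  rw [Finset.mem_range]
  omega

lemma Bfun_card_odd (m : ℕ) : (Bfun (2 * m + 1)).card = (m + 2).choose 2 := by
  have key : (Bfun (2 * m + 1)).card
      = (Finset.powersetCard 2 (Finset.range (m + 2))).card := by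
    refine Finset.card_bij' (fun x _ => itrip x)
      (fun S hS => ![2 * (m + 1 - S.max' (powerset_ne hS)) + 1,
        2 * (S.min' (powerset_ne hS)),
        2 * (S.max' (powerset_ne hS) - S.min' (powerset_ne hS) - 1)]) ?_ ?_ ?_ ?_
    · intro x hx
      exact itrip_mem (by omega) x hx
    · intro S hS
      have hne := powerset_ne hS
      obtain ⟨hsub, hcard⟩ := Finset.mem_powersetCard.mp hS
      have hlt : S.min' hne < S.max' hne :=
        Finset.min'_lt_max'_of_card (s := S) (by omega)
      have hmax : S.max' hne < m + 2 := Finset.mem_range.mp (hsub (S.max'_mem hne))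
      rw [mem_Bfun, vec0, vec1, vec2]
      omega
    · intro x hx
      rw [mem_Bfun] at hx
      simp only [itrip_min, itrip_max]
      have h0 : 2 * (m + 1 - (x 1 / 2 + x 2 / 2 + 1)) + 1 = x 0 := by omega
      have h1 : 2 * (x 1 / 2) = x 1 := by omega
      have h2 : 2 * (x 1 / 2 + x 2 / 2 + 1 - x 1 / 2 - 1) = x 2 := by omega
      funext r
      fin_cases r
      · exact h0
      · exact h1
      · exact h2
    · intro S hS
      have hne := powerset_ne hS
      obtain ⟨hsub, hcard⟩ := Finset.mem_powersetCard.mp hS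
      have hlt : S.min' hne < S.max' hne :=
        Finset.min'_lt_max'_of_card (s := S) (by omega)
      have hmax : S.max' hne < m + 2 := Finset.mem_range.mp (hsub (S.max'_mem hne))
      rw [itrip, vec1, vec2]
      have e1 : 2 * (S.min' hne) / 2 = S.min' hne := by omega
      rw [e1]
      have e2 : S.min' hne + 2 * (S.max' hne - S.min' hne - 1) / 2 + 1
          = S.max' hne := by omega
      rw [e2]
      exact (eq_pair_of_card_two hcard hne).symm
  rw [key, Finset.card_powersetCard, Finset.card_range]

lemma Bfun_card_even (m : ℕ) : (Bfun (2 * m + 2)).card = (m + 2).choose 2 := by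
  have key : (Bfun (2 * m + 2)).card
      = (Finset.powersetCard 2 (Finset.range (m + 2))).card := by
    refine Finset.card_bij' (fun x _ => itrip x)
      (fun S hS => ![2 * (m + 1 - S.max' (powerset_ne hS)),
        2 * (S.min' (powerset_ne hS)) + 1,
        2 * (S.max' (powerset_ne hS) - S.min' (powerset_ne hS) - 1) + 1]) ?_ ?_ ?_ ?_
    · intro x hx
      exact itrip_mem (by omega) x hx
    · intro S hS
      have hne := powerset_ne hS
      obtain ⟨hsub, hcard⟩ := Finset.mem_powersetCard.mp hS
      have hlt : S.min' hne < S.max' hne :=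
        Finset.min'_lt_max'_of_card (s := S) (by omega)
      have hmax : S.max' hne < m + 2 := Finset.mem_range.mp (hsub (S.max'_mem hne))
      rw [mem_Bfun, vec0, vec1, vec2]
      omega
    · intro x hx
      rw [mem_Bfun] at hx
      simp only [itrip_min, itrip_max]
      have h0 : 2 * (m + 1 - (x 1 / 2 + x 2 / 2 + 1)) = x 0 := by omega
      have h1 : 2 * (x 1 / 2) + 1 = x 1 := by omega
      have h2 : 2 * (x 1 / 2 + x 2 / 2 + 1 - x 1 / 2 - 1) + 1 = x 2 := by omega
      funext r
      fin_cases r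
      · exact h0
      · exact h1
      · exact h2
    · intro S hS
      have hne := powerset_ne hS
      obtain ⟨hsub, hcard⟩ := Finset.mem_powersetCard.mp hS
      have hlt : S.min' hne < S.max' hne :=
        Finset.min'_lt_max'_of_card (s := S) (by omega)
      have hmax : S.max' hne < m + 2 := Finset.mem_range.mp (hsub (S.max'_mem hne))
      rw [itrip, vec1, vec2]
      have e1 : (2 * (S.min' hne) + 1) / 2 = S.min' hne := by omega
      rw [e1]
      have e2 : S.min' hne + (2 * (S.max' hne - S.min' hne - 1) + 1) / 2 + 1
          = S.max' hne := by omega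
      rw [e2]
      exact (eq_pair_of_card_two hcard hne).symm
  rw [key, Finset.card_powersetCard, Finset.card_range]

lemma Bfun_card (d : ℕ) (hd : 1 ≤ d) : (Bfun d).card = ((d + 1) / 2 + 1).choose 2 := by
  rcases Nat.even_or_odd d with h | h
  · obtain ⟨k, hk⟩ := h
    have hk1 : 1 ≤ k := by omega
    have e : (d + 1) / 2 + 1 = (k - 1) + 2 := by omega
    rw [e, show d = 2 * (k - 1) + 2 by omega]
    exact Bfun_card_even (k - 1)
  · obtain ⟨k, hk⟩ := h
    have e : (d + 1) / 2 + 1 = k + 2 := by omega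
    rw [e, hk]
    exact Bfun_card_odd k

lemma Bfun_zero : Bfun 0 = ∅ := by
  rw [Finset.eq_empty_iff_forall_notMem]
  intro x hx
  rw [mem_Bfun] at hx
  omega
lemma mk_mul_one_sub_X_sq (a : ℕ → ℤ) :
    PowerSeries.mk a * (1 - PowerSeries.X ^ 2)
      = PowerSeries.mk (fun d => a d - if 2 ≤ d then a (d - 2) else 0) := by
  ext n
  rw [mul_sub, mul_one, map_sub, PowerSeries.coeff_mul_X_pow']
  simp only [PowerSeries.coeff_mk]

lemma choose_succ_two (k : ℕ) : ((k + 1).choose 2 : ℤ) = k + (k.choose 2 : ℤ) := by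
  rw [Nat.choose_succ_succ k 1, Nat.choose_one_right]
  push_cast
  ring

lemma part1_s5 (d : ℕ) (hd : 1 ≤ d) :
    Module.finrank F3 ↥(homogeneousSubmodule (Fin 3) F3 d ⊓ relInv)
      = Nat.choose ((d + 1) / 2 + 1) 2 := by
  rw [finrank_eq_card, Bfun_card d hd]

lemma part2_s5 : homogeneousSubmodule (Fin 3) F3 0 ⊓ relInv = ⊥ := by
  apply le_antisymm
  · intro f hf
    rw [Submodule.mem_bot]
    have hmem := (mem_inf_iff 0 f).mp hf
    apply MvPolynomial.ext
    intro m
    rw [coeff_zero]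
    by_contra hc
    have hm := hmem m hc
    rw [mem_Bfin] at hm
    obtain ⟨h0, h1, h2⟩ := hm
    rw [Fin.sum_univ_three] at h0
    omega
  · exact bot_le

lemma part3_s5 :
    (PowerSeries.mk (fun d =>
        (Module.finrank F3 ↥(homogeneousSubmodule (Fin 3) F3 d ⊓ relInv) : ℤ)) *
      (1 - PowerSeries.X ^ 2) ^ 3 = PowerSeries.X + PowerSeries.X ^ 2 : Prop) := by
  have hF : (PowerSeries.mk (fun d =>
        (Module.finrank F3 ↥(homogeneousSubmodule (Fin 3) F3 d ⊓ relInv) : ℤ)))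
      = PowerSeries.mk (fun d => if d = 0 then 0
          else (Nat.choose ((d + 1) / 2 + 1) 2 : ℤ)) := by
    ext n
    simp only [PowerSeries.coeff_mk]
    by_cases hd : n = 0
    · subst hd
      rw [if_pos rfl, part2_s5, finrank_bot]
      rfl
    · rw [if_neg hd, part1_s5 n (by omega)]
  rw [hF]
  have e3 : (1 - PowerSeries.X ^ 2 : PowerSeries ℤ) ^ 3
      = (1 - PowerSeries.X ^ 2) * (1 - PowerSeries.X ^ 2) * (1 - PowerSeries.X ^ 2) := by
    ring
  rw [e3, ← mul_assoc, ← mul_assoc, mk_mul_one_sub_X_sq]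
  have h1 : PowerSeries.mk (fun d =>
      (if d = 0 then 0 else (Nat.choose ((d + 1) / 2 + 1) 2 : ℤ))
        - if 2 ≤ d then (if d - 2 = 0 then 0 else (Nat.choose ((d - 2 + 1) / 2 + 1) 2 : ℤ))
          else 0)
      = PowerSeries.mk (fun d => (((d + 1) / 2 : ℕ) : ℤ)) := by
    ext d
    simp only [PowerSeries.coeff_mk]
    rcases Nat.lt_or_ge d 3 with hd | hd
    · interval_cases d <;> norm_num [Nat.choose]
    · rcases Nat.even_or_odd d with h | h
      · obtain ⟨k, hk⟩ := h
        have hk2 : 2 ≤ k := by omega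
        rw [if_neg (by omega), if_pos (by omega), if_neg (by omega)]
        have e1 : (d + 1) / 2 + 1 = (k - 1) + 1 + 1 := by omega
        have e2 : (d - 2 + 1) / 2 + 1 = (k - 1) + 1 := by omega
        have e4 : ((d + 1) / 2 : ℕ) = k := by omega
        rw [e1, e2, e4, choose_succ_two (k - 1 + 1)]
        have e5 : ((k : ℕ) : ℤ) = ((k - 1 + 1 : ℕ) : ℤ) := by
          congr 1; omega
        rw [e5]
        ring
      · obtain ⟨k, hk⟩ := h
        have hk1 : 1 ≤ k := by omega
        rw [if_neg (by omega), if_pos (by omega), if_neg (by omega)]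
        have e1 : (d + 1) / 2 + 1 = (k + 1) + 1 := by omega
        have e2 : (d - 2 + 1) / 2 + 1 = k + 1 := by omega
        have e4 : ((d + 1) / 2 : ℕ) = k + 1 := by omega
        rw [e1, e2, e4, choose_succ_two (k + 1)]
        push_cast
        ring
  rw [h1, mk_mul_one_sub_X_sq]
  have h2 : PowerSeries.mk (fun d => (((d + 1) / 2 : ℕ) : ℤ)
        - if 2 ≤ d then (((d - 2 + 1) / 2 : ℕ) : ℤ) else 0)
      = PowerSeries.mk (fun d => if d = 0 then 0 else 1) := by
    ext d
    simp only [PowerSeries.coeff_mk]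
    split_ifs <;> omega
  rw [h2, mk_mul_one_sub_X_sq]
  ext n
  rw [PowerSeries.coeff_mk, map_add, PowerSeries.coeff_X, PowerSeries.coeff_X_pow]
  rcases n with _ | _ | _ | n
  · simp
  · simp
  · simp
  · have c1 : ¬(n + 1 + 1 + 1 = 0) := by omega
    have c2 : 2 ≤ n + 1 + 1 + 1 := by omega
    have c3 : ¬(n + 1 + 1 + 1 - 2 = 0) := by omega
    have c4 : ¬(n + 1 + 1 + 1 = 1) := by omega
    have c5 : ¬(n + 1 + 1 + 1 = 2) := by omega
    rw [if_neg c1, if_pos c2, if_neg c3, if_neg c4, if_neg c5]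
    ring
/-- For every `d ≥ 1`, the `𝔽₃`-dimension of the degree-`d` homogeneous component of
`S^H_χ` equals `C(⌊(d+1)/2⌋ + 1, 2)`, and the degree-0 component is zero; equivalently,
the Hilbert series of `S^H_χ` equals `(t + t²)/(1 - t²)³`. -/
theorem stmt5 :
    (∀ d : ℕ, 1 ≤ d →
      Module.finrank F3 ↥(homogeneousSubmodule (Fin 3) F3 d ⊓ relInv) =
        Nat.choose ((d + 1) / 2 + 1) 2) ∧
    (homogeneousSubmodule (Fin 3) F3 0 ⊓ relInv = ⊥) ∧
    (PowerSeries.mk (fun d =>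
        (Module.finrank F3 ↥(homogeneousSubmodule (Fin 3) F3 d ⊓ relInv) : ℤ)) *
      (1 - PowerSeries.X ^ 2) ^ 3 = PowerSeries.X + PowerSeries.X ^ 2) := by
  exact ⟨fun d hd => part1_s5 d hd, part2_s5, part3_s5⟩
end

section
/- A polynomial f ∈ S is a χ-relative H-invariant if and only if every monomial x₁^i x₂^j x₃^k occurring in f with nonzero coefficient satisfies j ≡ k (mod 2) and i ≢ j (mod 2). -/
open Matrix MvPolynomial

set_option synthInstance.maxHeartbeats 1000000
set_option maxHeartbeats 1000000

-- ===== auxiliary material =====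

instance instDecEqG3 : DecidableEq G3 := fun a b =>
  decidable_of_iff ((a : Matrix (Fin 2) (Fin 2) F3) = b) Subtype.ext_iff.symm

def km3 : G3 := ⟨!![-1, -1; -1, 1], by decide⟩
def nem : G3 := ⟨!![-1, 0; 0, -1], by decide⟩
def nim : G3 := ⟨!![0, -1; 1, 0], by decide⟩
def njm : G3 := ⟨!![-1, 1; 1, 1], by decide⟩
def nkm : G3 := ⟨!![1, 1; 1, -1], by decide⟩

def P8 (g : G3) : Prop :=
  g = 1 ∨ g = nem ∨ g = im ∨ g = nim ∨ g = jm ∨ g = njm ∨ g = km3 ∨ g = nkm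

instance (g : G3) : Decidable (P8 g) := by unfold P8; infer_instance

lemma P8_of_memH : ∀ g ∈ H3, P8 g := by
  intro g hg
  refine Subgroup.closure_induction (p := fun g _ => P8 g) ?_ ?_ ?_ ?_ hg
  · intro x hx
    rcases hx with h | h <;> subst h <;> decide
  · decide
  · intro x y _ _ hx hy
    rcases hx with h|h|h|h|h|h|h|h <;> rcases hy with h'|h'|h'|h'|h'|h'|h'|h' <;>
      subst h <;> subst h' <;> decide
  · intro x _ hx
    rcases hx with h|h|h|h|h|h|h|h <;> subst h <;> decide

lemma aeval_diag_monomial (d : Fin 3 → F3) (u : Fin 3 →₀ ℕ) (a : F3) :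
    aeval (fun s => d s • (X s : S3)) (monomial u a) = C (∏ s, d s ^ u s) * monomial u a := by
  have hprod : (∏ s, d s ^ u s) = ∏ s ∈ u.support, d s ^ u s := by
    refine (Finset.prod_subset (Finset.subset_univ _) ?_).symm
    intro x _ hx
    rw [Finsupp.notMem_support_iff.mp hx, pow_zero]
  rw [aeval_monomial, hprod, monomial_eq, Finsupp.prod, Finsupp.prod,
    MvPolynomial.algebraMap_eq]
  simp only [smul_pow, MvPolynomial.smul_eq_C_mul, mul_pow, ← map_pow, map_prod]
  rw [Finset.prod_mul_distrib]
  ring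

lemma coeff_diag (d : Fin 3 → F3) (f : S3) (m : Fin 3 →₀ ℕ) :
    coeff m (aeval (fun s => d s • (X s : S3)) f) = (∏ s, d s ^ m s) * coeff m f := by
  induction f using MvPolynomial.induction_on' with
  | monomial u a =>
    rw [aeval_diag_monomial, coeff_C_mul, coeff_monomial]
    split_ifs with h
    · rw [h]
    · rw [mul_zero, mul_zero]
  | add p q hp hq =>
    rw [map_add, coeff_add, coeff_add, hp, hq, mul_add]

lemma key_s6 (g : G3) (f : S3) (d : Fin 3 → F3)
    (hrep : (fun s => ∑ r : Fin 3, rep g s r • (X r : S3)) = fun s => d s • X s) :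
    (actS g f = chi g • f ↔ ∀ m ∈ f.support, (∏ s, d s ^ m s) = chi g) := by
  have hact : actS g f = aeval (fun s => d s • (X s : S3)) f := by
    simp only [actS, hrep]
  rw [hact]
  constructor
  · intro h m hm
    have h2 := congrArg (coeff m) h
    rw [coeff_diag, coeff_smul, smul_eq_mul] at h2
    exact mul_right_cancel₀ (MvPolynomial.mem_support_iff.mp hm) h2
  · intro h
    apply MvPolynomial.ext
    intro m
    rw [coeff_diag, coeff_smul, smul_eq_mul]
    by_cases hm : m ∈ f.support
    · rw [h m hm]
    · rw [MvPolynomial.notMem_support_iff.mp hm, mul_zero, mul_zero]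

lemma hrep_of (g : G3) (d : Fin 3 → F3) (hd : rep g = Matrix.diagonal d) :
    (fun s => ∑ r : Fin 3, rep g s r • (X r : S3)) = fun s => d s • X s := by
  funext s
  rw [hd]
  fin_cases s <;>
    simp [Fin.sum_univ_three, Matrix.diagonal]

lemma neg_one_pow_f3 (n : ℕ) : (-1 : F3) ^ n = if n % 2 = 0 then 1 else -1 := by
  rcases Nat.even_or_odd n with h | h
  · rw [h.neg_one_pow, Nat.even_iff.mp h]; simp
  · rw [h.neg_one_pow, Nat.odd_iff.mp h]; simp

lemma parity_one (a b : ℕ) : ((-1 : F3) ^ a * (-1 : F3) ^ b = 1) ↔ a % 2 = b % 2 := by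
  rcases Nat.mod_two_eq_zero_or_one a with h1 | h1 <;>
    rcases Nat.mod_two_eq_zero_or_one b with h2 | h2 <;>
      rw [neg_one_pow_f3, neg_one_pow_f3, h1, h2] <;> decide

lemma parity_neg (a b : ℕ) : ((-1 : F3) ^ a * (-1 : F3) ^ b = -1) ↔ a % 2 ≠ b % 2 := by
  rcases Nat.mod_two_eq_zero_or_one a with h1 | h1 <;>
    rcases Nat.mod_two_eq_zero_or_one b with h2 | h2 <;>
      rw [neg_one_pow_f3, neg_one_pow_f3, h1, h2] <;> decide

/-- A polynomial `f ∈ S` is a `χ`-relative `H`-invariant if and only if every monomial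
`x₁^i x₂^j x₃^k` occurring in `f` with nonzero coefficient satisfies `j ≡ k (mod 2)`
and `i ≢ j (mod 2)`. -/
theorem stmt6 (f : S3) :
    (∀ h ∈ H3, actS h f = chi h • f) ↔
      ∀ m ∈ f.support, m 1 % 2 = m 2 % 2 ∧ m 0 % 2 ≠ m 1 % 2 := by
  have him : im ∈ H3 := Subgroup.subset_closure (Or.inl rfl)
  have hjm : jm ∈ H3 := Subgroup.subset_closure (Or.inr rfl)
  have repi : rep im = Matrix.diagonal ![1, -1, -1] := by decide
  have repj : rep jm = Matrix.diagonal ![-1, -1, 1] := by decide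
  constructor
  · intro hf m hm
    have h1 := (key_s6 im f ![1, -1, -1] (hrep_of _ _ repi)).mp (hf im him) m hm
    have h2 := (key_s6 jm f ![-1, -1, 1] (hrep_of _ _ repj)).mp (hf jm hjm) m hm
    rw [show chi im = 1 by decide] at h1
    rw [show chi jm = -1 by decide] at h2
    rw [Fin.prod_univ_three] at h1 h2
    simp only [Matrix.cons_val_zero, Matrix.cons_val_one, Matrix.head_cons,
      Matrix.cons_val_two, Matrix.tail_cons, one_pow, one_mul, mul_one] at h1 h2
    exact ⟨(parity_one _ _).mp h1, (parity_neg _ _).mp h2⟩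
  · intro hc g hg
    rcases P8_of_memH g hg with h|h|h|h|h|h|h|h <;> subst h
    · refine (key_s6 1 f ![1, 1, 1] (hrep_of _ _ (by decide))).mpr fun m _ => ?_
      rw [show chi 1 = 1 by decide, Fin.prod_univ_three]
      simp
    · refine (key_s6 nem f ![1, 1, 1] (hrep_of _ _ (by decide))).mpr fun m _ => ?_
      rw [show chi nem = 1 by decide, Fin.prod_univ_three]
      simp
    · refine (key_s6 im f ![1, -1, -1] (hrep_of _ _ repi)).mpr fun m hm => ?_
      rw [show chi im = 1 by decide, Fin.prod_univ_three]
      simp only [Matrix.cons_val_zero, Matrix.cons_val_one, Matrix.head_cons,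
        Matrix.cons_val_two, Matrix.tail_cons, one_pow, one_mul]
      exact (parity_one _ _).mpr (hc m hm).1
    · refine (key_s6 nim f ![1, -1, -1] (hrep_of _ _ (by decide))).mpr fun m hm => ?_
      rw [show chi nim = 1 by decide, Fin.prod_univ_three]
      simp only [Matrix.cons_val_zero, Matrix.cons_val_one, Matrix.head_cons,
        Matrix.cons_val_two, Matrix.tail_cons, one_pow, one_mul]
      exact (parity_one _ _).mpr (hc m hm).1
    · refine (key_s6 jm f ![-1, -1, 1] (hrep_of _ _ repj)).mpr fun m hm => ?_
      rw [show chi jm = -1 by decide, Fin.prod_univ_three]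
      simp only [Matrix.cons_val_zero, Matrix.cons_val_one, Matrix.head_cons,
        Matrix.cons_val_two, Matrix.tail_cons, one_pow, mul_one]
      exact (parity_neg _ _).mpr (hc m hm).2
    · refine (key_s6 njm f ![-1, -1, 1] (hrep_of _ _ (by decide))).mpr fun m hm => ?_
      rw [show chi njm = -1 by decide, Fin.prod_univ_three]
      simp only [Matrix.cons_val_zero, Matrix.cons_val_one, Matrix.head_cons,
        Matrix.cons_val_two, Matrix.tail_cons, one_pow, mul_one]
      exact (parity_neg _ _).mpr (hc m hm).2
    · refine (key_s6 km3 f ![-1, 1, -1] (hrep_of _ _ (by decide))).mpr fun m hm => ?_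
      rw [show chi km3 = -1 by decide, Fin.prod_univ_three]
      simp only [Matrix.cons_val_zero, Matrix.cons_val_one, Matrix.head_cons,
        Matrix.cons_val_two, Matrix.tail_cons, one_pow, mul_one]
      refine (parity_neg _ _).mpr ?_
      have h1 := (hc m hm).1
      have h2 := (hc m hm).2
      omega
    · refine (key_s6 nkm f ![-1, 1, -1] (hrep_of _ _ (by decide))).mpr fun m hm => ?_
      rw [show chi nkm = -1 by decide, Fin.prod_univ_three]
      simp only [Matrix.cons_val_zero, Matrix.cons_val_one, Matrix.head_cons,
        Matrix.cons_val_two, Matrix.tail_cons, one_pow, mul_one]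
      refine (parity_neg _ _).mpr ?_
      have h1 := (hc m hm).1
      have h2 := (hc m hm).2
      omega
end
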